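/- arXiv:1510.03299 — 15 statements merged into one kernel-verified Lean document; each statement's English description precedes it below -/
import Mathlib

section
/- Let m ≥ 1, let M, I_S : Fin m → ℝ be probability vectors, and suppose I_S i > 0 for every i. For λ̂ ∈ (0,1], every entry of the vector l̂ defined by l̂ i = (1/λ̂)·M i + (1 − 1/λ̂)·I_S i is nonnegative if and only if λ̂ ≥ max_i (1 − M i / I_S i). -/
/-- For probability vectors `M`, `I_S` on `Fin m` (`m ≥ 1`) with `I_S i > 0`,
and `λ̂ ∈ (0,1]`, every entry of `l̂ i = (1/λ̂)·M i + (1 − 1/λ̂)·I_S i` is nonnegative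
iff `λ̂ ≥ max_i (1 − M i / I_S i)`. -/
theorem stmt_0 (m : ℕ) (hm : 1 ≤ m) (M IS : Fin m → ℝ)
    (hMnn : ∀ i, 0 ≤ M i) (hMsum : ∑ i, M i = 1)
    (hISpos : ∀ i, 0 < IS i) (hISsum : ∑ i, IS i = 1)
    (lam : ℝ) (hlam : lam ∈ Set.Ioc (0 : ℝ) 1) :
    (∀ i, 0 ≤ (1 / lam) * M i + (1 - 1 / lam) * IS i) ↔
      Finset.univ.sup'
        (Finset.univ_nonempty_iff.mpr (Fin.pos_iff_nonempty.mp hm))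
        (fun i => 1 - M i / IS i) ≤ lam := by
  obtain ⟨hl0, hl1⟩ := hlam
  rw [Finset.sup'_le_iff]
  simp only [Finset.mem_univ, true_implies]
  refine forall_congr' fun i => ?_
  have hIS := hISpos i
  constructor
  · intro h
    have h2 : 0 ≤ M i + (lam - 1) * IS i := by
      have := mul_nonneg hl0.le h
      field_simp at this
      nlinarith
    have h3 : 1 - lam ≤ M i / IS i := by
      rw [le_div_iff₀ hIS]; nlinarith
    linarith
  · intro h
    have h3 : 1 - lam ≤ M i / IS i := by linarith
    have h2 : (1 - lam) * IS i ≤ M i := by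
      rw [le_div_iff₀ hIS] at h3; nlinarith
    have h4 : 0 ≤ (1/lam) * (M i + (lam - 1) * IS i) :=
      mul_nonneg (by positivity) (by nlinarith)
    calc (0:ℝ) ≤ (1/lam) * (M i + (lam - 1) * IS i) := h4
      _ = (1 / lam) * M i + (1 - 1 / lam) * IS i := by field_simp
end

section
/- (Lemma 1) Let m ≥ 1, let l and I_S be probability vectors on Fin m with I_S i > 0 for all i, let 0 < λ ≤ 1, and define M i = λ·l i + (1 − λ)·I_S i. If l j = 0 for some index j, then λ = max_i (1 − M i / I_S i), i.e., the true combination coefficient equals its lower bound λ_L. -/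
/-- Lemma 1: If the desired distribution `l` has a zero entry, then the true
combination coefficient `λ` equals its lower bound `λ_L = max_i (1 − M i / I_S i)`,
where `M = λ·l + (1 − λ)·I_S`. -/
theorem stmt_1 (m : ℕ) (hm : 1 ≤ m) (l IS : Fin m → ℝ)
    (hlnn : ∀ i, 0 ≤ l i) (hlsum : ∑ i, l i = 1)
    (hISpos : ∀ i, 0 < IS i) (hISsum : ∑ i, IS i = 1)
    (lam : ℝ) (hlam0 : 0 < lam) (hlam1 : lam ≤ 1)
    (M : Fin m → ℝ) (hM : ∀ i, M i = lam * l i + (1 - lam) * IS i)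
    (j : Fin m) (hj : l j = 0) :
    lam = Finset.univ.sup'
        (Finset.univ_nonempty_iff.mpr (Fin.pos_iff_nonempty.mp hm))
        (fun i => 1 - M i / IS i) := by
  have key : ∀ i, 1 - M i / IS i = lam * (1 - l i / IS i) := by
    intro i
    have h := (hISpos i).ne'
    rw [hM i]
    field_simp
    ring
  apply le_antisymm
  · apply Finset.le_sup' (f := fun i => 1 - M i / IS i) (b := j) (Finset.mem_univ j) |>.trans_eq'
    rw [key j, hj]
    simp
  · apply Finset.sup'_le
    intro i _
    rw [key i]
    nlinarith [div_nonneg (hlnn i) (hISpos i).le]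
end

section
/- (Proposition 1, minimum correlation) Let m ≥ 1 and let M, I_S : Fin m → ℝ be probability vectors. Set a = Σ_i (I_S i − 1/m)(M i − I_S i), b = Σ_i (I_S i − 1/m)², v = Σ_i (M i − I_S i)², and assume b > 0 and a² < b·v. For λ̂ > 0 define l̂_{λ̂} i = (1/λ̂)·M i + (1 − 1/λ̂)·I_S i. Then for all 0 < λ̂₁ < λ̂₂, the Pearson correlation coefficient satisfies ρ(l̂_{λ̂₁}, I_S) < ρ(l̂_{λ̂₂}, I_S); that is, as the coefficient λ̂ decreases, the correlation between DSM's output distribution and the seed irrelevance distribution decreases. -/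
/-- Pearson product-moment correlation coefficient of two vectors on `Fin m`
(with the convention that division by zero yields 0). -/
noncomputable def pearson {m : ℕ} (x y : Fin m → ℝ) : ℝ :=
  (∑ i, (x i - (∑ j, x j) / m) * (y i - (∑ j, y j) / m)) /
    (Real.sqrt (∑ i, (x i - (∑ j, x j) / m) ^ 2) *
      Real.sqrt (∑ i, (y i - (∑ j, y j) / m) ^ 2))



lemma key_mono (a b v t₁ t₂ : ℝ) (hb : 0 < b) (hav : a ^ 2 < b * v)
    (ht₂ : 0 < t₂) (ht : t₂ < t₁) :
    (b + t₁ * a) / Real.sqrt (b + 2 * t₁ * a + t₁ ^ 2 * v) <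
      (b + t₂ * a) / Real.sqrt (b + 2 * t₂ * a + t₂ ^ 2 * v) := by
  have hv : 0 < v := by nlinarith [sq_nonneg a]
  have hQ : ∀ t : ℝ, 0 < b + 2 * t * a + t ^ 2 * v := by
    intro t
    nlinarith [sq_nonneg (v * t + a)]
  have hQ₁ := hQ t₁
  have hQ₂ := hQ t₂
  set Q₁ := b + 2 * t₁ * a + t₁ ^ 2 * v with hQ₁def
  set Q₂ := b + 2 * t₂ * a + t₂ ^ 2 * v with hQ₂def
  have hs₁ : 0 < Real.sqrt Q₁ := Real.sqrt_pos.2 hQ₁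
  have hs₂ : 0 < Real.sqrt Q₂ := Real.sqrt_pos.2 hQ₂
  have hsq₁ : Real.sqrt Q₁ ^ 2 = Q₁ := Real.sq_sqrt hQ₁.le
  have hsq₂ : Real.sqrt Q₂ ^ 2 = Q₂ := Real.sq_sqrt hQ₂.le
  rw [div_lt_div_iff₀ hs₁ hs₂]
  rcases le_or_gt 0 (b + t₁ * a) with hL | hL
  · -- both numerators nonneg, in fact b + t₂ a > 0
    have hR : 0 < b + t₂ * a := by
      rcases le_or_gt 0 a with hA | hA
      · nlinarith
      · nlinarith
    have hbr : 0 < b * (t₁ + t₂) + 2 * a * (t₁ * t₂) := by nlinarith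
    have hD : (b + t₁ * a) ^ 2 * Q₂ < (b + t₂ * a) ^ 2 * Q₁ := by
      have := mul_pos (mul_pos (sub_pos.2 ht) (sub_pos.2 hav)) hbr
      nlinarith [this]
    have h2 : ((b + t₁ * a) * Real.sqrt Q₂) ^ 2 < ((b + t₂ * a) * Real.sqrt Q₁) ^ 2 := by
      rw [mul_pow, mul_pow, hsq₁, hsq₂]; exact hD
    exact lt_of_pow_lt_pow_left₀ 2 (by positivity) h2
  · rcases le_or_gt 0 (b + t₂ * a) with hR | hR
    · calc (b + t₁ * a) * Real.sqrt Q₂ < 0 := mul_neg_of_neg_of_pos hL hs₂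
        _ ≤ (b + t₂ * a) * Real.sqrt Q₁ := mul_nonneg hR hs₁.le
    · -- both negative
      have hbr : b * (t₁ + t₂) + 2 * a * (t₁ * t₂) < 0 := by nlinarith
      have hD : (b + t₂ * a) ^ 2 * Q₁ < (b + t₁ * a) ^ 2 * Q₂ := by
        have := mul_pos (mul_pos (sub_pos.2 ht) (sub_pos.2 hav)) (neg_pos.2 hbr)
        nlinarith [this]
      have h2 : (-((b + t₂ * a) * Real.sqrt Q₁)) ^ 2 < (-((b + t₁ * a) * Real.sqrt Q₂)) ^ 2 := by
        rw [neg_pow, neg_pow]; simp only [mul_pow, hsq₁, hsq₂]; nlinarith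
      have := lt_of_pow_lt_pow_left₀ 2 (neg_nonneg.2 (mul_neg_of_neg_of_pos hL hs₂).le) h2
      linarith


/-- Proposition 1: as the coefficient `λ̂` decreases, the Pearson correlation
between DSM's output distribution `l̂_λ̂ = (1/λ̂)·M + (1 − 1/λ̂)·I_S` and the seed
irrelevance distribution `I_S` decreases. -/
theorem stmt_2 (m : ℕ) (hm : 1 ≤ m) (M IS : Fin m → ℝ)
    (hMnn : ∀ i, 0 ≤ M i) (hMsum : ∑ i, M i = 1)
    (hISnn : ∀ i, 0 ≤ IS i) (hISsum : ∑ i, IS i = 1)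
    (a b v : ℝ)
    (ha : a = ∑ i, (IS i - 1 / m) * (M i - IS i))
    (hb : b = ∑ i, (IS i - 1 / m) ^ 2)
    (hv : v = ∑ i, (M i - IS i) ^ 2)
    (hbpos : 0 < b) (hav : a ^ 2 < b * v)
    (lam₁ lam₂ : ℝ) (h1 : 0 < lam₁) (h12 : lam₁ < lam₂) :
    pearson (fun i => (1 / lam₁) * M i + (1 - 1 / lam₁) * IS i) IS <
      pearson (fun i => (1 / lam₂) * M i + (1 - 1 / lam₂) * IS i) IS := by
  have hpear : ∀ t : ℝ, pearson (fun i => t * M i + (1 - t) * IS i) IS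
      = (b + t * a) / Real.sqrt (b + 2 * t * a + t ^ 2 * v) / Real.sqrt b := by
    intro t
    have hsum : ∑ i, (t * M i + (1 - t) * IS i) = 1 := by
      rw [Finset.sum_add_distrib, ← Finset.mul_sum, ← Finset.mul_sum, hMsum, hISsum]
      ring
    have hnum : ∑ i, (t * M i + (1 - t) * IS i - 1 / m) * (IS i - 1 / m) = b + t * a := by
      rw [hb, ha, Finset.mul_sum, ← Finset.sum_add_distrib]
      exact Finset.sum_congr rfl fun i _ => by ring
    have hden : ∑ i, (t * M i + (1 - t) * IS i - 1 / m) ^ 2 = b + 2 * t * a + t ^ 2 * v := by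
      rw [hb, ha, hv, Finset.mul_sum, Finset.mul_sum, ← Finset.sum_add_distrib,
        ← Finset.sum_add_distrib]
      exact Finset.sum_congr rfl fun i _ => by ring
    simp only [pearson, hsum, hISsum]
    rw [hnum, hden, ← hb, div_div]
  have e1 := hpear (1 / lam₁)
  have e2 := hpear (1 / lam₂)
  rw [e1, e2]
  have hsb : 0 < Real.sqrt b := Real.sqrt_pos.2 hbpos
  have hkey := key_mono a b v (1 / lam₁) (1 / lam₂) hbpos hav
    (by have := h1.trans h12; positivity) (one_div_lt_one_div_of_lt h1 h12)
  exact (div_lt_div_iff_of_pos_right hsb).2 hkey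
end

section
/- Let m ≥ 1 and let M, I_S : Fin m → ℝ be probability vectors. Set a = Σ_i (I_S i − 1/m)(M i − I_S i) and b = Σ_i (I_S i − 1/m)², and assume a < 0 and b > 0. If λ̂ = −a/b and l̂ i = (1/λ̂)·M i + (1 − 1/λ̂)·I_S i, then Σ_i (l̂ i − 1/m)(I_S i − 1/m) = 0; consequently the Pearson correlation coefficient ρ(l̂, I_S) equals 0. -/
/-- at `λ̂ = −a/b` the covariance between DSM's output `l̂` and `I_S`
vanishes, hence so does the Pearson correlation coefficient. -/
theorem stmt_4 (m : ℕ) (hm : 1 ≤ m) (M IS : Fin m → ℝ)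
    (hMnn : ∀ i, 0 ≤ M i) (hMsum : ∑ i, M i = 1)
    (hISnn : ∀ i, 0 ≤ IS i) (hISsum : ∑ i, IS i = 1)
    (a b : ℝ)
    (ha : a = ∑ i, (IS i - 1 / m) * (M i - IS i))
    (hb : b = ∑ i, (IS i - 1 / m) ^ 2)
    (haneg : a < 0) (hbpos : 0 < b)
    (lam : ℝ) (hlam : lam = -a / b)
    (l : Fin m → ℝ) (hl : ∀ i, l i = (1 / lam) * M i + (1 - 1 / lam) * IS i) :
    (∑ i, (l i - 1 / m) * (IS i - 1 / m) = 0) ∧ pearson l IS = 0 := by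
  have hlampos : 0 < lam := by
    rw [hlam]; exact div_pos (neg_pos.mpr haneg) hbpos
  have hlamne : lam ≠ 0 := ne_of_gt hlampos
  have hinv : 1 / lam = -b / a := by
    rw [hlam]
    rw [one_div, inv_div, div_neg, neg_div]
  have hane : a ≠ 0 := ne_of_lt haneg
  have key : ∑ i, (l i - 1 / m) * (IS i - 1 / m) = 0 := by
    have expand : ∀ i, (l i - 1 / m) * (IS i - 1 / m) =
        (1 / lam) * ((IS i - 1 / m) * (M i - IS i)) + (IS i - 1 / m) ^ 2 := by
      intro i
      rw [hl i]; ring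
    rw [Finset.sum_congr rfl fun i _ => expand i, Finset.sum_add_distrib,
      ← Finset.mul_sum, ← ha, ← hb, hinv]
    field_simp
    ring
  refine ⟨key, ?_⟩
  have hlsum : ∑ i, l i = 1 := by
    simp only [hl]
    rw [Finset.sum_add_distrib, ← Finset.mul_sum, ← Finset.mul_sum, hMsum, hISsum]
    ring
  unfold pearson
  rw [hlsum, hISsum]
  rw [key]
  simp
end

section
/- Let m ≥ 1 and let M, I_S : Fin m → ℝ be probability vectors. Set a = Σ_i (I_S i − 1/m)(M i − I_S i) and b = Σ_i (I_S i − 1/m)², and assume a < 0, b > 0, and λ_L ≤ −a/b ≤ 1, where λ_L = max_i (1 − M i / I_S i). Then λ̂* = −a/b solves the optimization problem min over λ̂ ∈ [λ_L, 1] of the squared Pearson correlation ρ(l̂_{λ̂}, I_S)², where l̂_{λ̂} i = (1/λ̂)·M i + (1 − 1/λ̂)·I_S i; indeed ρ(l̂_{λ̂*}, I_S)² = 0 ≤ ρ(l̂_{λ̂}, I_S)² for every λ̂ ∈ [λ_L, 1]. -/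
/-- if `λ_L ≤ −a/b ≤ 1`, then `λ̂* = −a/b` minimizes the squared Pearson
correlation `ρ(l̂_λ̂, I_S)²` over `λ̂ ∈ [λ_L, 1]`: indeed
`ρ(l̂_{λ̂*}, I_S)² = 0 ≤ ρ(l̂_λ̂, I_S)²` for every `λ̂ ∈ [λ_L, 1]`. -/
theorem stmt_5 (m : ℕ) (hm : 1 ≤ m) (M IS : Fin m → ℝ)
    (hMnn : ∀ i, 0 ≤ M i) (hMsum : ∑ i, M i = 1)
    (hISpos : ∀ i, 0 < IS i) (hISsum : ∑ i, IS i = 1)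
    (a b : ℝ)
    (ha : a = ∑ i, (IS i - 1 / m) * (M i - IS i))
    (hb : b = ∑ i, (IS i - 1 / m) ^ 2)
    (haneg : a < 0) (hbpos : 0 < b)
    (lamL : ℝ)
    (hlamL : lamL = Finset.univ.sup'
        (Finset.univ_nonempty_iff.mpr (Fin.pos_iff_nonempty.mp hm))
        (fun i => 1 - M i / IS i))
    (hL : lamL ≤ -a / b) (hU : -a / b ≤ 1) :
    (pearson (fun i => (1 / (-a / b)) * M i + (1 - 1 / (-a / b)) * IS i) IS) ^ 2 = 0 ∧
      ∀ lam : ℝ, lamL ≤ lam → lam ≤ 1 →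
        0 ≤ (pearson (fun i => (1 / lam) * M i + (1 - 1 / lam) * IS i) IS) ^ 2 := by
  refine ⟨?_, fun lam _ _ => sq_nonneg _⟩
  set lam := -a / b with hlamdef
  have hlampos : 0 < lam := div_pos (neg_pos.mpr haneg) hbpos
  have hlamne : lam ≠ 0 := ne_of_gt hlampos
  set f : Fin m → ℝ := fun i => (1 / lam) * M i + (1 - 1 / lam) * IS i with hf
  have hfsum : ∑ j, f j = 1 := by
    simp only [hf, Finset.sum_add_distrib, ← Finset.mul_sum, hMsum, hISsum]
    ring
  have hnum : ∑ i, (f i - (∑ j, f j) / m) * (IS i - (∑ j, IS j) / m) = 0 := by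
    rw [hfsum, hISsum]
    have : ∀ i, (f i - 1 / m) * (IS i - 1 / m)
        = (IS i - 1 / m) ^ 2 + (1 / lam) * ((IS i - 1 / m) * (M i - IS i)) := by
      intro i
      simp only [hf]
      field_simp
      ring
    rw [Finset.sum_congr rfl (fun i _ => this i), Finset.sum_add_distrib,
      ← Finset.mul_sum, ← ha, ← hb]
    have hane : a ≠ 0 := haneg.ne
    rw [hlamdef]
    have hnane : -a ≠ 0 := neg_ne_zero.mpr hane
    field_simp
    ring
  simp [pearson, hnum]
end

section
/- (Proposition 2, maximum KL-divergence) Let m ≥ 1 and let M, I_S : Fin m → ℝ be probability vectors with I_S i > 0 for all i and M ≠ I_S. For ξ > 0 define l̂_ξ i = ξ·(M i − I_S i) + I_S i. If 0 < ξ₁ < ξ₂ and l̂_{ξ₂} i ≥ 0 for all i, then D(l̂_{ξ₁}, I_S) < D(l̂_{ξ₂}, I_S). Equivalently, as the coefficient λ̂ = 1/ξ decreases, the KL-divergence between DSM's output distribution and the seed irrelevance distribution I_S strictly increases. -/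
/-- KL-divergence `D(p, q) = Σ_i p i · log(p i / q i)`. A summand with `p i = 0`
contributes `0 · log 0 = 0`, matching the usual convention. -/
noncomputable def KL {m : ℕ} (p q : Fin m → ℝ) : ℝ :=
  ∑ i, p i * Real.log (p i / q i)

lemma sub_one_le_mul_log {x : ℝ} (hx : 0 ≤ x) : x - 1 ≤ x * Real.log x := by
  rcases eq_or_lt_of_le hx with h | h
  · simp [← h]
  · have := Real.log_le_sub_one_of_pos (x := x⁻¹) (by positivity)
    rw [Real.log_inv] at this
    have hx' : x ≠ 0 := ne_of_gt h
    have : -Real.log x ≤ x⁻¹ - 1 := this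
    nlinarith [mul_pos h h, inv_mul_cancel₀ hx']

lemma sub_one_lt_mul_log {x : ℝ} (hx : 0 ≤ x) (hx1 : x ≠ 1) : x - 1 < x * Real.log x := by
  rcases eq_or_lt_of_le hx with h | h
  · simp [← h]
  · have := Real.log_lt_sub_one_of_pos (x := x⁻¹) (by positivity) (by
      simp [inv_eq_one]; exact hx1)
    rw [Real.log_inv] at this
    have hx' : x ≠ 0 := ne_of_gt h
    nlinarith [mul_pos h h, inv_mul_cancel₀ hx']

/-- Proposition 2: as `λ̂ = 1/ξ` decreases (i.e. `ξ` increases), the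
KL-divergence between DSM's output `l̂_ξ = ξ·(M − I_S) + I_S` and `I_S` strictly increases. -/
theorem stmt_6 (m : ℕ) (hm : 1 ≤ m) (M IS : Fin m → ℝ)
    (hMnn : ∀ i, 0 ≤ M i) (hMsum : ∑ i, M i = 1)
    (hISpos : ∀ i, 0 < IS i) (hISsum : ∑ i, IS i = 1)
    (hne : M ≠ IS)
    (xi₁ xi₂ : ℝ) (h1 : 0 < xi₁) (h12 : xi₁ < xi₂)
    (hnn : ∀ i, 0 ≤ xi₂ * (M i - IS i) + IS i) :
    KL (fun i => xi₁ * (M i - IS i) + IS i) IS <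
      KL (fun i => xi₂ * (M i - IS i) + IS i) IS := by
  classical
  set φ : ℝ → ℝ := fun x => x * Real.log x with hφ
  have h2 : (0:ℝ) < xi₂ := h1.trans h12
  set r₁ : Fin m → ℝ := fun i => (xi₁ * (M i - IS i) + IS i) / IS i with hr₁
  set r₂ : Fin m → ℝ := fun i => (xi₂ * (M i - IS i) + IS i) / IS i with hr₂
  have hISne : ∀ i, IS i ≠ 0 := fun i => ne_of_gt (hISpos i)
  have hterm : ∀ (ξ : ℝ), ∀ i : Fin m,
      (ξ * (M i - IS i) + IS i) * Real.log ((ξ * (M i - IS i) + IS i) / IS i)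
        = IS i * φ ((ξ * (M i - IS i) + IS i) / IS i) := by
    intro ξ i
    simp only [hφ]
    rw [← mul_assoc, mul_div_cancel₀ _ (hISne i)]
  have hKL : ∀ ξ : ℝ, KL (fun i => ξ * (M i - IS i) + IS i) IS
      = ∑ i, IS i * φ ((ξ * (M i - IS i) + IS i) / IS i) := by
    intro ξ
    unfold KL
    exact Finset.sum_congr rfl fun i _ => hterm ξ i
  have hr₂nn : ∀ i, 0 ≤ r₂ i := fun i => div_nonneg (hnn i) (hISpos i).le
  set t : ℝ := xi₁ / xi₂ with ht
  have ht0 : 0 < t := div_pos h1 h2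
  have ht1 : t < 1 := (div_lt_one h2).mpr h12
  -- convexity step: φ (r₁ i) ≤ t * φ (r₂ i)
  have hstep : ∀ i, φ (r₁ i) ≤ t * φ (r₂ i) := by
    intro i
    have hconv := Real.convexOn_mul_log.2 (Set.mem_Ici.mpr (by norm_num : (0:ℝ) ≤ 1)) (Set.mem_Ici.mpr (hr₂nn i))
      (by linarith : (0:ℝ) ≤ 1 - t) ht0.le (by ring)
    have hpt : (1 - t) • (1:ℝ) + t • r₂ i = r₁ i := by
      simp only [smul_eq_mul, hr₁, hr₂, ht]
      field_simp [hISne i, ne_of_gt h2]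
      ring
    rw [hpt] at hconv
    simpa [hφ] using hconv
  have key1 : KL (fun i => xi₁ * (M i - IS i) + IS i) IS
      ≤ t * KL (fun i => xi₂ * (M i - IS i) + IS i) IS := by
    rw [hKL, hKL, Finset.mul_sum]
    apply Finset.sum_le_sum
    intro i _
    have := hstep i
    calc IS i * φ (r₁ i) ≤ IS i * (t * φ (r₂ i)) :=
          mul_le_mul_of_nonneg_left this (hISpos i).le
      _ = t * (IS i * φ (r₂ i)) := by ring
  -- positivity of KL at ξ₂
  have hsum2 : ∑ i, (xi₂ * (M i - IS i) + IS i) = 1 := by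
    simp [Finset.sum_add_distrib, ← Finset.mul_sum, Finset.sum_sub_distrib,
      hMsum, hISsum]
  obtain ⟨j, hj⟩ : ∃ j, M j ≠ IS j := by
    by_contra h
    push_neg at h
    exact hne (funext h)
  have hr₂j : r₂ j ≠ 1 := by
    intro h
    apply hj
    have h' := (div_eq_one_iff_eq (hISne j)).mp h
    have : xi₂ * (M j - IS j) = 0 := by linarith
    rcases mul_eq_zero.mp this with h | h
    · exact absurd h (ne_of_gt h2)
    · linarith
  have key2 : 0 < KL (fun i => xi₂ * (M i - IS i) + IS i) IS := by
    rw [hKL]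
    have hlb : ∑ i, IS i * (r₂ i - 1) < ∑ i, IS i * φ (r₂ i) := by
      apply Finset.sum_lt_sum
      · intro i _
        exact mul_le_mul_of_nonneg_left (sub_one_le_mul_log (hr₂nn i)) (hISpos i).le
      · exact ⟨j, Finset.mem_univ j,
          mul_lt_mul_of_pos_left (sub_one_lt_mul_log (hr₂nn j) hr₂j) (hISpos j)⟩
    have heq : ∑ i, IS i * (r₂ i - 1) = 0 := by
      have : ∀ i, IS i * (r₂ i - 1) = (xi₂ * (M i - IS i) + IS i) - IS i := by
        intro i
        simp only [hr₂]
        rw [mul_sub, mul_div_cancel₀ _ (hISne i)]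
        ring
      rw [Finset.sum_congr rfl fun i _ => this i, Finset.sum_sub_distrib, hsum2, hISsum]
      ring
    linarith
  nlinarith [key1, key2]
end

section
/- Let m ≥ 1 and let M, I_S : Fin m → ℝ be probability vectors with I_S i > 0 for all i and M ≠ I_S. Let ξ > 0 and suppose l̂_ξ i = ξ·(M i − I_S i) + I_S i > 0 for all i. Then Σ_i (M i − I_S i)·log(l̂_ξ i / I_S i) > 0; that is, the derivative with respect to ξ of the KL-divergence D(l̂_ξ, I_S) is strictly positive. -/
lemma term_nonneg (a b : ℝ) (ha : 0 < a) (hb : 0 < b) :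
    0 ≤ (a - b) * Real.log (a / b) := by
  rcases le_total b a with h | h
  · exact mul_nonneg (by linarith) (Real.log_nonneg ((one_le_div hb).2 h))
  · have := Real.log_nonpos (show 0 ≤ a/b by positivity) ((div_le_one hb).2 h)
    nlinarith

lemma term_pos (a b : ℝ) (ha : 0 < a) (hb : 0 < b) (hne : a ≠ b) :
    0 < (a - b) * Real.log (a / b) := by
  rcases lt_or_gt_of_ne hne with h | h
  · have hlog : Real.log (a / b) < 0 :=
      Real.log_neg (by positivity) ((div_lt_one hb).2 h)
    nlinarith
  · have hlog : 0 < Real.log (a / b) :=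
      Real.log_pos ((one_lt_div hb).2 h)
    nlinarith

/-- the derivative with respect to `ξ` of the KL-divergence `D(l̂_ξ, I_S)`,
namely `Σ_i (M i − I_S i)·log(l̂_ξ i / I_S i)`, is strictly positive. -/
theorem stmt_8 (m : ℕ) (hm : 1 ≤ m) (M IS : Fin m → ℝ)
    (hMnn : ∀ i, 0 ≤ M i) (hMsum : ∑ i, M i = 1)
    (hISpos : ∀ i, 0 < IS i) (hISsum : ∑ i, IS i = 1)
    (hne : M ≠ IS)
    (xi : ℝ) (hxi : 0 < xi)
    (l : Fin m → ℝ) (hl : ∀ i, l i = xi * (M i - IS i) + IS i)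
    (hlpos : ∀ i, 0 < l i) :
    0 < ∑ i, (M i - IS i) * Real.log (l i / IS i) := by
  have key : ∀ i, (M i - IS i) * Real.log (l i / IS i)
      = (1 / xi) * ((l i - IS i) * Real.log (l i / IS i)) := by
    intro i
    rw [hl i]
    field_simp
    ring
  simp_rw [key, ← Finset.mul_sum]
  apply mul_pos (by positivity)
  obtain ⟨j, hj⟩ : ∃ j, M j ≠ IS j := by
    by_contra h
    push_neg at h
    exact hne (funext h)
  have hjl : l j ≠ IS j := by
    rw [hl j]
    intro h
    apply hj
    have : xi * (M j - IS j) = 0 := by linarith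
    have := mul_eq_zero.1 this
    rcases this with h | h
    · exact absurd h (ne_of_gt hxi)
    · linarith
  apply Finset.sum_pos' (fun i _ => term_nonneg _ _ (hlpos i) (hISpos i))
  exact ⟨j, Finset.mem_univ j, term_pos _ _ (hlpos j) (hISpos j) hjl⟩
end

section
/- (Proposition 3, maximum symmetrized KL-divergence) Let m ≥ 1 and let M, I_S : Fin m → ℝ be probability vectors with I_S i > 0 for all i and M ≠ I_S. For ξ > 0 define l̂_ξ i = ξ·(M i − I_S i) + I_S i. If 0 < ξ₁ < ξ₂ and l̂_{ξ₂} i > 0 for all i, then the symmetrized KL-divergence satisfies D(l̂_{ξ₁}, I_S) + D(I_S, l̂_{ξ₁}) < D(l̂_{ξ₂}, I_S) + D(I_S, l̂_{ξ₂}). Equivalently, as the coefficient λ̂ = 1/ξ decreases, the symmetrized KL-divergence between DSM's output distribution and the seed irrelevance distribution strictly increases. -/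
lemma key_strict (I d ξ₁ ξ₂ : ℝ) (hI : 0 < I) (h1 : 0 < ξ₁) (h12 : ξ₁ < ξ₂)
    (hp2 : 0 < ξ₂ * d + I) (hd : d ≠ 0) :
    ξ₁ * d * Real.log ((ξ₁ * d + I) / I) < ξ₂ * d * Real.log ((ξ₂ * d + I) / I) := by
  rcases lt_or_gt_of_ne hd with hd | hd
  · -- d < 0
    have hp1 : 0 < ξ₁ * d + I := by nlinarith
    have hr1 : (ξ₁ * d + I) / I < 1 := by
      rw [div_lt_one hI]; nlinarith
    have hr2 : (ξ₂ * d + I) / I < (ξ₁ * d + I) / I := by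
      rw [div_lt_div_iff₀ hI hI]
      nlinarith [mul_lt_mul_of_pos_right (show ξ₂ * d < ξ₁ * d by nlinarith) hI]
    have hL1 : Real.log ((ξ₁ * d + I) / I) < 0 := Real.log_neg (by positivity) hr1
    have hL2 : Real.log ((ξ₂ * d + I) / I) < Real.log ((ξ₁ * d + I) / I) :=
      Real.log_lt_log (by positivity) hr2
    have h := mul_lt_mul'' (show -(ξ₂ * d) > -(ξ₁ * d) by nlinarith)
      (show -Real.log ((ξ₁ * d + I) / I) < -Real.log ((ξ₂ * d + I) / I) by linarith)
      (by nlinarith) (by linarith)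
    nlinarith [h]
  · -- d > 0
    have hr1 : 1 < (ξ₁ * d + I) / I := by
      rw [lt_div_iff₀ hI]; nlinarith
    have hr2 : (ξ₁ * d + I) / I < (ξ₂ * d + I) / I := by
      rw [div_lt_div_iff₀ hI hI]
      nlinarith [mul_lt_mul_of_pos_right (show ξ₁ * d < ξ₂ * d by nlinarith) hI]
    have hL1 : 0 < Real.log ((ξ₁ * d + I) / I) := Real.log_pos hr1
    have hL2 : Real.log ((ξ₁ * d + I) / I) < Real.log ((ξ₂ * d + I) / I) :=
      Real.log_lt_log (by positivity) hr2
    have h := mul_lt_mul'' (show ξ₁ * d < ξ₂ * d by nlinarith) hL2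
      (by positivity) hL1.le
    linarith

lemma key_le (I d ξ₁ ξ₂ : ℝ) (hI : 0 < I) (h1 : 0 < ξ₁) (h12 : ξ₁ < ξ₂)
    (hp2 : 0 < ξ₂ * d + I) :
    ξ₁ * d * Real.log ((ξ₁ * d + I) / I) ≤ ξ₂ * d * Real.log ((ξ₂ * d + I) / I) := by
  rcases eq_or_ne d 0 with h | h
  · simp [h]
  · exact (key_strict I d ξ₁ ξ₂ hI h1 h12 hp2 h).le

/-- Proposition 3: as `λ̂ = 1/ξ` decreases (i.e. `ξ` increases), the
symmetrized KL-divergence between DSM's output `l̂_ξ = ξ·(M − I_S) + I_S` and `I_S`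
strictly increases. -/
theorem stmt_9 (m : ℕ) (hm : 1 ≤ m) (M IS : Fin m → ℝ)
    (hMnn : ∀ i, 0 ≤ M i) (hMsum : ∑ i, M i = 1)
    (hISpos : ∀ i, 0 < IS i) (hISsum : ∑ i, IS i = 1)
    (hne : M ≠ IS)
    (xi₁ xi₂ : ℝ) (h1 : 0 < xi₁) (h12 : xi₁ < xi₂)
    (hpos : ∀ i, 0 < xi₂ * (M i - IS i) + IS i) :
    KL (fun i => xi₁ * (M i - IS i) + IS i) IS +
        KL IS (fun i => xi₁ * (M i - IS i) + IS i) <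
      KL (fun i => xi₂ * (M i - IS i) + IS i) IS +
        KL IS (fun i => xi₂ * (M i - IS i) + IS i) := by
  have hsum : ∀ ξ : ℝ,
      KL (fun i => ξ * (M i - IS i) + IS i) IS +
        KL IS (fun i => ξ * (M i - IS i) + IS i) =
      ∑ i, (ξ * (M i - IS i)) *
        Real.log ((ξ * (M i - IS i) + IS i) / IS i) := by
    intro ξ
    unfold KL
    rw [← Finset.sum_add_distrib]
    refine Finset.sum_congr rfl fun i _ => ?_
    have hlog : Real.log (IS i / (ξ * (M i - IS i) + IS i)) =
        - Real.log ((ξ * (M i - IS i) + IS i) / IS i) := by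
      rw [← Real.log_inv, inv_div]
    rw [hlog]; ring
  rw [hsum xi₁, hsum xi₂]
  have hex : ∃ i, M i ≠ IS i := by
    by_contra h
    push_neg at h
    exact hne (funext h)
  obtain ⟨j, hj⟩ := hex
  apply Finset.sum_lt_sum
  · intro i _
    exact key_le (IS i) (M i - IS i) xi₁ xi₂ (hISpos i) h1 h12 (hpos i)
  · exact ⟨j, Finset.mem_univ j,
      key_strict (IS j) (M j - IS j) xi₁ xi₂ (hISpos j) h1 h12 (hpos j)
        (sub_ne_zero.mpr hj)⟩
end

section
/- Let m ≥ 1 and let M, I_S : Fin m → ℝ be probability vectors with I_S i > 0 for all i and M ≠ I_S. For ξ > 0 define l̂_ξ i = ξ·(M i − I_S i) + I_S i. If 0 < ξ₁ < ξ₂ and l̂_{ξ₂} i > 0 for all i, then the reverse KL-divergence satisfies D(I_S, l̂_{ξ₁}) < D(I_S, l̂_{ξ₂}). -/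
/-- Concavity of log: for `g > 0`, `t ∈ (0,1)`, `t * log g ≤ log (t*g + (1-t))`,
strict when `g ≠ 1`. -/
lemma log_conc {g t : ℝ} (hg : 0 < g) (ht0 : 0 < t) (ht1 : t < 1) :
    t * Real.log g ≤ Real.log (t * g + (1 - t)) := by
  rcases eq_or_ne g 1 with rfl | hne
  · simp
  · have := strictConcaveOn_log_Ioi.2 (Set.mem_Ioi.mpr hg)
      (Set.mem_Ioi.mpr one_pos) hne ht0 (show (0:ℝ) < 1 - t by linarith) (by ring)
    simp only [smul_eq_mul, Real.log_one, mul_one] at this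
    linarith

lemma log_conc_strict {g t : ℝ} (hg : 0 < g) (hne : g ≠ 1) (ht0 : 0 < t) (ht1 : t < 1) :
    t * Real.log g < Real.log (t * g + (1 - t)) := by
  have := strictConcaveOn_log_Ioi.2 (Set.mem_Ioi.mpr hg)
    (Set.mem_Ioi.mpr one_pos) hne ht0 (show (0:ℝ) < 1 - t by linarith) (by ring)
  simp only [smul_eq_mul, Real.log_one, mul_one] at this
  linarith

/-- the reverse KL-divergence `D(I_S, l̂_ξ)` strictly increases in `ξ`:
for `0 < ξ₁ < ξ₂` with `l̂_{ξ₂}` entrywise positive, `D(I_S, l̂_{ξ₁}) < D(I_S, l̂_{ξ₂})`. -/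
theorem stmt_10 (m : ℕ) (hm : 1 ≤ m) (M IS : Fin m → ℝ)
    (hMnn : ∀ i, 0 ≤ M i) (hMsum : ∑ i, M i = 1)
    (hISpos : ∀ i, 0 < IS i) (hISsum : ∑ i, IS i = 1)
    (hne : M ≠ IS)
    (xi₁ xi₂ : ℝ) (h1 : 0 < xi₁) (h12 : xi₁ < xi₂)
    (hpos : ∀ i, 0 < xi₂ * (M i - IS i) + IS i) :
    KL IS (fun i => xi₁ * (M i - IS i) + IS i) <
      KL IS (fun i => xi₂ * (M i - IS i) + IS i) := by
  set l1 : Fin m → ℝ := fun i => xi₁ * (M i - IS i) + IS i with hl1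
  set l2 : Fin m → ℝ := fun i => xi₂ * (M i - IS i) + IS i with hl2
  have h2 : 0 < xi₂ := h1.trans h12
  set t : ℝ := xi₁ / xi₂ with hT
  have ht0 : 0 < t := div_pos h1 h2
  have ht1 : t < 1 := (div_lt_one h2).mpr h12
  -- l1 = t • l2 + (1-t) • IS
  have hconv : ∀ i, l1 i = t * l2 i + (1 - t) * IS i := by
    intro i
    have htx : t * xi₂ = xi₁ := div_mul_cancel₀ xi₁ h2.ne'
    simp only [hl1, hl2]
    linear_combination (-(M i - IS i)) * htx
  have hl1pos : ∀ i, 0 < l1 i := by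
    intro i
    rw [hconv i]
    have h1' : 0 < t * l2 i := mul_pos ht0 (hpos i)
    have h2' : 0 < (1 - t) * IS i := mul_pos (by linarith) (hISpos i)
    linarith
  -- rewrite KL terms: IS i * log (IS i / l i) = - (IS i * log (l i / IS i))
  have hKL : ∀ l : Fin m → ℝ, (∀ i, 0 < l i) →
      KL IS l = -∑ i, IS i * Real.log (l i / IS i) := by
    intro l hl
    rw [KL, ← Finset.sum_neg_distrib]
    refine Finset.sum_congr rfl fun i _ => ?_
    rw [← mul_neg, ← Real.log_inv]
    congr 2
    field_simp
  -- g i = l2 i / IS i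
  have hg : ∀ i, 0 < l2 i / IS i := fun i => div_pos (hpos i) (hISpos i)
  -- pointwise: t * log (l2 i / IS i) ≤ log (l1 i / IS i), strict when M i ≠ IS i
  have hpt : ∀ i, t * Real.log (l2 i / IS i) ≤ Real.log (l1 i / IS i) := by
    intro i
    have key : l1 i / IS i = t * (l2 i / IS i) + (1 - t) := by
      rw [hconv i, add_div, mul_div_assoc, mul_div_assoc, div_self (ne_of_gt (hISpos i))]
      ring
    rw [key]
    exact log_conc (hg i) ht0 ht1
  obtain ⟨j, hj⟩ : ∃ j, M j ≠ IS j := by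
    by_contra h
    push_neg at h
    exact hne (funext h)
  have hptj : t * Real.log (l2 j / IS j) < Real.log (l1 j / IS j) := by
    have key : l1 j / IS j = t * (l2 j / IS j) + (1 - t) := by
      rw [hconv j, add_div, mul_div_assoc, mul_div_assoc, div_self (ne_of_gt (hISpos j))]
      ring
    rw [key]
    refine log_conc_strict (hg j) ?_ ht0 ht1
    intro hone
    have hl2j : xi₂ * (M j - IS j) + IS j = IS j :=
      (div_eq_one_iff_eq (ne_of_gt (hISpos j))).mp hone
    have : xi₂ * (M j - IS j) = 0 := by linarith
    have := mul_eq_zero.mp this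
    rcases this with h' | h'
    · exact absurd h' (ne_of_gt h2)
    · exact hj (by linarith)
  -- S2 := Σ IS i log (l2 i / IS i) ≤ 0
  have hS2 : ∑ i, IS i * Real.log (l2 i / IS i) ≤ 0 := by
    have hsum : ∑ i, (l2 i - IS i) = 0 := by
      calc ∑ i, (l2 i - IS i) = ∑ i, xi₂ * (M i - IS i) := by
            refine Finset.sum_congr rfl fun i _ => ?_
            show xi₂ * (M i - IS i) + IS i - IS i = xi₂ * (M i - IS i)
            ring
        _ = xi₂ * ∑ i, (M i - IS i) := (Finset.mul_sum _ _ _).symm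
        _ = 0 := by rw [Finset.sum_sub_distrib, hMsum, hISsum]; ring
    calc ∑ i, IS i * Real.log (l2 i / IS i)
        ≤ ∑ i, (l2 i - IS i) := by
          refine Finset.sum_le_sum fun i _ => ?_
          have hle := Real.log_le_sub_one_of_pos (hg i)
          have := hISpos i
          calc IS i * Real.log (l2 i / IS i) ≤ IS i * (l2 i / IS i - 1) := by
                exact mul_le_mul_of_nonneg_left hle this.le
            _ = l2 i - IS i := by field_simp
      _ = 0 := hsum
  -- S1 > t * S2 ≥ S2
  have hS1 : ∑ i, IS i * (t * Real.log (l2 i / IS i)) <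
      ∑ i, IS i * Real.log (l1 i / IS i) := by
    refine Finset.sum_lt_sum (fun i _ => ?_) ⟨j, Finset.mem_univ j, ?_⟩
    · exact mul_le_mul_of_nonneg_left (hpt i) (hISpos i).le
    · exact mul_lt_mul_of_pos_left hptj (hISpos j)
  have hfact : ∑ i, IS i * (t * Real.log (l2 i / IS i))
      = t * ∑ i, IS i * Real.log (l2 i / IS i) := by
    rw [Finset.mul_sum]; refine Finset.sum_congr rfl fun i _ => by ring
  have htS2 : ∑ i, IS i * Real.log (l2 i / IS i) ≤
      t * ∑ i, IS i * Real.log (l2 i / IS i) := by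
    nlinarith
  rw [hKL l1 hl1pos, hKL l2 hpos]
  rw [hfact] at hS1
  linarith
end

section
/- Let m ≥ 1 and let M, I_S : Fin m → ℝ be probability vectors with M ≠ I_S. Let ξ > 0 and suppose l̂_ξ i = ξ·(M i − I_S i) + I_S i > 0 for all i. Then Σ_i (−I_S i·(M i − I_S i)/l̂_ξ i) > 0; that is, the derivative with respect to ξ of the reverse KL-divergence D(I_S, l̂_ξ) is strictly positive. -/
/-- the derivative with respect to `ξ` of the reverse KL-divergence
`D(I_S, l̂_ξ)`, namely `Σ_i (−I_S i·(M i − I_S i)/l̂_ξ i)`, is strictly positive. -/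
theorem stmt_13 (m : ℕ) (hm : 1 ≤ m) (M IS : Fin m → ℝ)
    (hMnn : ∀ i, 0 ≤ M i) (hMsum : ∑ i, M i = 1)
    (hISnn : ∀ i, 0 ≤ IS i) (hISsum : ∑ i, IS i = 1)
    (hne : M ≠ IS)
    (xi : ℝ) (hxi : 0 < xi)
    (l : Fin m → ℝ) (hl : ∀ i, l i = xi * (M i - IS i) + IS i)
    (hlpos : ∀ i, 0 < l i) :
    0 < ∑ i, -(IS i) * (M i - IS i) / l i := by
  have key : ∀ i, -(IS i) * (M i - IS i) / l i
      = xi * (M i - IS i)^2 / l i - (M i - IS i) := by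
    intro i
    have h := (hlpos i).ne'
    rw [hl i] at h ⊢
    rw [eq_sub_iff_add_eq, div_add' _ _ _ h, div_left_inj' h]
    ring
  have hsum : (∑ i, -(IS i) * (M i - IS i) / l i)
      = ∑ i, xi * (M i - IS i)^2 / l i := by
    simp only [key]
    rw [Finset.sum_sub_distrib, Finset.sum_sub_distrib, hMsum, hISsum]
    ring
  rw [hsum]
  obtain ⟨j, hj⟩ : ∃ j, M j ≠ IS j := by
    by_contra h
    push_neg at h
    exact hne (funext h)
  apply Finset.sum_pos' (fun i _ => div_nonneg (by positivity) (hlpos i).le)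
  refine ⟨j, Finset.mem_univ j, ?_⟩
  have h0 : M j - IS j ≠ 0 := sub_ne_zero_of_ne hj
  exact div_pos (by positivity) (hlpos j)
end

section
/- (Proposition 4, maximum JS-divergence) Let m ≥ 1 and let M, I_S : Fin m → ℝ be probability vectors with I_S i > 0 for all i and M ≠ I_S. For ξ > 0 define l̂_ξ i = ξ·(M i − I_S i) + I_S i. If 0 < ξ₁ < ξ₂ and l̂_{ξ₂} i ≥ 0 for all i, then JS(l̂_{ξ₁}, I_S) < JS(l̂_{ξ₂}, I_S). Equivalently, as the coefficient λ̂ = 1/ξ decreases, the Jensen–Shannon divergence between DSM's output distribution and the seed irrelevance distribution strictly increases. -/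
/-- Jensen–Shannon divergence `JS(p,q) = ½ D(p, (p+q)/2) + ½ D(q, (p+q)/2)`. -/
noncomputable def JS {m : ℕ} (p q : Fin m → ℝ) : ℝ :=
  (1 / 2) * KL p (fun i => (p i + q i) / 2) + (1 / 2) * KL q (fun i => (p i + q i) / 2)

namespace Stmt14Aux

open Real

/-- Basic bound: `a - b ≤ a log(a/b)` for `a ≥ 0`, `b > 0`. -/
lemma klo {a b : ℝ} (ha : 0 ≤ a) (hb : 0 < b) : a - b ≤ a * Real.log (a / b) := by
  rcases ha.eq_or_lt with h0 | h0
  · simp [← h0]; linarith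
  · have h := Real.log_le_sub_one_of_pos (div_pos hb h0)
    have hlog : Real.log (a / b) = - Real.log (b / a) := by
      rw [← Real.log_inv, inv_div]
    have hba : a * (b / a - 1) = b - a := by field_simp
    nlinarith [mul_le_mul_of_nonneg_left h h0.le]

/-- Strict version when `a ≠ b`. -/
lemma klo_strict {a b : ℝ} (ha : 0 ≤ a) (hb : 0 < b) (hab : a ≠ b) :
    a - b < a * Real.log (a / b) := by
  rcases ha.eq_or_lt with h0 | h0
  · simp [← h0]; linarith
  · have hne : b / a ≠ 1 := by
      intro h
      exact hab ((div_eq_one_iff_eq h0.ne').mp h).symm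
    have h := Real.log_lt_sub_one_of_pos (div_pos hb h0) hne
    have hlog : Real.log (a / b) = - Real.log (b / a) := by
      rw [← Real.log_inv, inv_div]
    have hba : a * (b / a - 1) = b - a := by field_simp
    nlinarith [mul_lt_mul_of_pos_left h h0]

/-- Two-point log-sum inequality. -/
lemma logsum {a₁ a₂ b₁ b₂ : ℝ} (ha₁ : 0 ≤ a₁) (ha₂ : 0 ≤ a₂) (hb₁ : 0 < b₁) (hb₂ : 0 < b₂) :
    (a₁ + a₂) * Real.log ((a₁ + a₂) / (b₁ + b₂)) ≤
      a₁ * Real.log (a₁ / b₁) + a₂ * Real.log (a₂ / b₂) := by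
  rcases eq_or_lt_of_le (add_nonneg ha₁ ha₂) with hs | hs
  · have h1 : a₁ = 0 := by linarith
    have h2 : a₂ = 0 := by linarith
    simp [h1, h2]
  · set c : ℝ := (a₁ + a₂) / (b₁ + b₂) with hc
    have hbb : 0 < b₁ + b₂ := by linarith
    have hcpos : 0 < c := div_pos hs hbb
    have key : ∀ a b : ℝ, 0 ≤ a → 0 < b →
        a * Real.log (a / b) = a * Real.log (a / (b * c)) + a * Real.log c := by
      intro a b hA hB
      rcases hA.eq_or_lt with h0 | h0
      · simp [← h0]
      · rw [← mul_add, ← Real.log_mul (by positivity) hcpos.ne']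
        congr 2
        field_simp
    have k1 := klo ha₁ (mul_pos hb₁ hcpos)
    have k2 := klo ha₂ (mul_pos hb₂ hcpos)
    have hsum : b₁ * c + b₂ * c = a₁ + a₂ := by
      rw [← add_mul, hc, mul_comm]
      exact div_mul_cancel₀ _ hbb.ne'
    rw [key a₁ b₁ ha₁ hb₁, key a₂ b₂ ha₂ hb₂]
    nlinarith

/-- The per-coordinate JS integrand. -/
noncomputable def F (x q : ℝ) : ℝ :=
  x * Real.log (x / ((x + q) / 2)) + q * Real.log (q / ((x + q) / 2))

lemma F_nonneg {x q : ℝ} (hx : 0 ≤ x) (hq : 0 < q) : 0 ≤ F x q := by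
  have hr : 0 < (x + q) / 2 := by linarith
  have h1 := klo hx hr
  have h2 := klo hq.le hr
  unfold F
  linarith

lemma F_pos {x q : ℝ} (hx : 0 ≤ x) (hq : 0 < q) (hxq : x ≠ q) : 0 < F x q := by
  have hr : 0 < (x + q) / 2 := by linarith
  have hqr : q ≠ (x + q) / 2 := fun h => hxq (by linarith)
  have h1 := klo hx hr
  have h2 := klo_strict hq.le hr hqr
  unfold F
  linarith

/-- Convexity-type inequality: `F (t x + (1-t) q) q ≤ t * F x q` for `t ∈ (0,1)`. -/
lemma F_conv {t x q : ℝ} (ht : 0 < t) (ht1 : t < 1) (hx : 0 ≤ x) (hq : 0 < q) :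
    F (t * x + (1 - t) * q) q ≤ t * F x q := by
  set rx : ℝ := (x + q) / 2 with hrx
  set y : ℝ := t * x + (1 - t) * q with hy
  set ry : ℝ := (y + q) / 2 with hry
  have h1t : 0 < 1 - t := by linarith
  have hrxpos : 0 < rx := by rw [hrx]; linarith
  have hrypos : 0 < ry := by
    have : 0 ≤ t * x := mul_nonneg ht.le hx
    rw [hry, hy]; nlinarith
  have hryeq : ry = t * rx + (1 - t) * q := by rw [hry, hy, hrx]; ring
  -- Term A via log-sum
  have hA : y * Real.log (y / ry) ≤ t * (x * Real.log (x / rx)) := by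
    have h := logsum (mul_nonneg ht.le hx) (mul_nonneg h1t.le hq.le)
      (mul_pos ht hrxpos) (mul_pos h1t hq)
    have e1 : t * x + (1 - t) * q = y := hy.symm
    have e2 : t * rx + (1 - t) * q = ry := hryeq.symm
    have e3 : t * x / (t * rx) = x / rx := mul_div_mul_left _ _ ht.ne'
    have e4 : (1 - t) * q / ((1 - t) * q) = 1 := div_self (by positivity)
    rw [e1, e2, e3, e4, Real.log_one, mul_zero, add_zero, mul_assoc] at h
    exact h
  -- Term B via concavity of log
  have hB : q * Real.log (q / ry) ≤ t * (q * Real.log (q / rx)) := by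
    have l1 := Real.log_le_sub_one_of_pos (div_pos hrxpos hrypos)
    have l2 := Real.log_le_sub_one_of_pos (div_pos hq hrypos)
    rw [Real.log_div hrxpos.ne' hrypos.ne'] at l1
    rw [Real.log_div hq.ne' hrypos.ne'] at l2
    have hsum : t * (rx / ry) + (1 - t) * (q / ry) = 1 := by
      field_simp
      linarith [hryeq]
    have hlog : t * Real.log rx + (1 - t) * Real.log q ≤ Real.log ry := by
      nlinarith [mul_le_mul_of_nonneg_left l1 ht.le, mul_le_mul_of_nonneg_left l2 h1t.le]
    rw [Real.log_div hq.ne' hrypos.ne', Real.log_div hq.ne' hrxpos.ne']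
    nlinarith
  unfold F
  rw [mul_add]
  exact add_le_add hA hB

lemma JS_eq {m : ℕ} (p q : Fin m → ℝ) : JS p q = (1 / 2) * ∑ i, F (p i) (q i) := by
  simp only [JS, KL, F]
  rw [Finset.mul_sum, Finset.mul_sum, ← Finset.sum_add_distrib, Finset.mul_sum]
  refine Finset.sum_congr rfl fun i _ => by ring

end Stmt14Aux

/-- Proposition 4: as `λ̂ = 1/ξ` decreases (i.e. `ξ` increases), the
JS-divergence between DSM's output `l̂_ξ = ξ·(M − I_S) + I_S` and `I_S` strictly increases. -/
theorem stmt_14 (m : ℕ) (hm : 1 ≤ m) (M IS : Fin m → ℝ)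
    (hMnn : ∀ i, 0 ≤ M i) (hMsum : ∑ i, M i = 1)
    (hISpos : ∀ i, 0 < IS i) (hISsum : ∑ i, IS i = 1)
    (hne : M ≠ IS)
    (xi₁ xi₂ : ℝ) (h1 : 0 < xi₁) (h12 : xi₁ < xi₂)
    (hnn : ∀ i, 0 ≤ xi₂ * (M i - IS i) + IS i) :
    JS (fun i => xi₁ * (M i - IS i) + IS i) IS <
      JS (fun i => xi₂ * (M i - IS i) + IS i) IS := by
  classical
  open Stmt14Aux in
  have h2 : 0 < xi₂ := lt_trans h1 h12
  set t : ℝ := xi₁ / xi₂ with htdef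
  have ht : 0 < t := div_pos h1 h2
  have ht1 : t < 1 := (div_lt_one h2).mpr h12
  set b : Fin m → ℝ := fun i => xi₂ * (M i - IS i) + IS i with hb
  have hab : ∀ i, xi₁ * (M i - IS i) + IS i = t * b i + (1 - t) * IS i := by
    intro i
    rw [hb, htdef]
    field_simp
    ring
  rw [Stmt14Aux.JS_eq, Stmt14Aux.JS_eq]
  have hstep : ∀ i, Stmt14Aux.F (xi₁ * (M i - IS i) + IS i) (IS i) ≤
      t * Stmt14Aux.F (b i) (IS i) := by
    intro i
    rw [hab i]
    exact Stmt14Aux.F_conv ht ht1 (hnn i) (hISpos i)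
  have hsum1 : ∑ i, Stmt14Aux.F (xi₁ * (M i - IS i) + IS i) (IS i) ≤
      t * ∑ i, Stmt14Aux.F (b i) (IS i) := by
    rw [Finset.mul_sum]
    exact Finset.sum_le_sum fun i _ => hstep i
  have hpos : 0 < ∑ i, Stmt14Aux.F (b i) (IS i) := by
    obtain ⟨j, hj⟩ := Function.ne_iff.mp hne
    refine Finset.sum_pos' (fun i _ => Stmt14Aux.F_nonneg (hnn i) (hISpos i)) ⟨j, Finset.mem_univ j, ?_⟩
    refine Stmt14Aux.F_pos (hnn j) (hISpos j) ?_
    intro h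
    apply hj
    have h' : xi₂ * (M j - IS j) + IS j = IS j := h
    have : xi₂ * (M j - IS j) = 0 := by linarith
    have := (mul_eq_zero.mp this).resolve_left h2.ne'
    linarith
  have : t * ∑ i, Stmt14Aux.F (b i) (IS i) < ∑ i, Stmt14Aux.F (b i) (IS i) := by
    nlinarith
  linarith
end

section
/- Let m ≥ 1 and let M, I_S : Fin m → ℝ be probability vectors with I_S i > 0 for all i and M ≠ I_S. Let ξ > 0 and suppose l̂_ξ i = ξ·(M i − I_S i) + I_S i > 0 for all i. Then Σ_i (M i − I_S i)·log(2·l̂_ξ i/(l̂_ξ i + I_S i)) > 0; that is, the derivative with respect to ξ of twice the JS-divergence, J(ξ) = 2·JS(l̂_ξ, I_S), is strictly positive. -/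
/-- the derivative with respect to `ξ` of twice the JS-divergence
`J(ξ) = 2·JS(l̂_ξ, I_S)`, namely `Σ_i (M i − I_S i)·log(2·l̂_ξ i/(l̂_ξ i + I_S i))`,
is strictly positive. -/
theorem stmt_16 (m : ℕ) (hm : 1 ≤ m) (M IS : Fin m → ℝ)
    (hMnn : ∀ i, 0 ≤ M i) (hMsum : ∑ i, M i = 1)
    (hISpos : ∀ i, 0 < IS i) (hISsum : ∑ i, IS i = 1)
    (hne : M ≠ IS)
    (xi : ℝ) (hxi : 0 < xi)
    (l : Fin m → ℝ) (hl : ∀ i, l i = xi * (M i - IS i) + IS i)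
    (hlpos : ∀ i, 0 < l i) :
    0 < ∑ i, (M i - IS i) * Real.log (2 * l i / (l i + IS i)) := by
  have key : ∀ i, (M i ≠ IS i → 0 < (M i - IS i) * Real.log (2 * l i / (l i + IS i)))
      ∧ 0 ≤ (M i - IS i) * Real.log (2 * l i / (l i + IS i)) := by
    intro i
    have hsum : 0 < l i + IS i := by have := hlpos i; have := hISpos i; linarith
    rcases lt_trichotomy (M i - IS i) 0 with hd | hd | hd
    · have hlt : l i < IS i := by
        have := hl i; nlinarith
      have hrpos : 0 < 2 * l i / (l i + IS i) := div_pos (by linarith [hlpos i]) hsum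
      have hrlt : 2 * l i / (l i + IS i) < 1 := by
        rw [div_lt_one hsum]; linarith
      have hlog : Real.log (2 * l i / (l i + IS i)) < 0 := Real.log_neg hrpos hrlt
      have hpos := mul_pos_of_neg_of_neg hd hlog
      exact ⟨fun _ => hpos, le_of_lt hpos⟩
    · have : M i = IS i := by linarith
      constructor
      · intro h; exact absurd this h
      · rw [hd]; simp
    · have hlt : IS i < l i := by
        have := hl i; nlinarith
      have hrgt : 1 < 2 * l i / (l i + IS i) := by
        rw [lt_div_iff₀ hsum]; linarith
      have hlog : 0 < Real.log (2 * l i / (l i + IS i)) := Real.log_pos hrgt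
      have hpos := mul_pos hd hlog
      exact ⟨fun _ => hpos, le_of_lt hpos⟩
  obtain ⟨j, hj⟩ : ∃ j, M j ≠ IS j := by
    by_contra h
    push_neg at h
    exact hne (funext h)
  exact Finset.sum_pos' (fun i _ => (key i).2) ⟨j, Finset.mem_univ j, (key j).1 hj⟩
end

section
/- (Proposition 5, EM fixed point is a linear separation) Let V be a nonempty finite type (the vocabulary). Let c : V → ℝ satisfy c w ≥ 0 for all w and Σ_w c w > 0 (term counts in the feedback documents). Let 0 < λ ≤ 1 and let θ, pC : V → ℝ satisfy θ w > 0 and pC w ≥ 0 for all w, Σ_w θ w = 1 and Σ_w pC w = 1. Suppose θ is a fixed point of the EM iteration of the mixture model feedback approach, i.e., for every w, θ w = [ (λ·θ w / (λ·θ w + (1 − λ)·pC w)) · c w ] / [ Σ_{w*} (λ·θ w* / (λ·θ w* + (1 − λ)·pC w*)) · c w* ]. Then for every w, λ·θ w + (1 − λ)·pC w = c w / Σ_{w*} c w*; that is, the mixture term-frequency distribution of the feedback documents is exactly the linear combination, with coefficient λ, of the EM output model θ and the collection model pC. -/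
/-- Proposition 5: a fixed point of the EM iteration of the Mixture Model
Feedback approach satisfies the linear-combination (distribution separation) identity
`λ·θ w + (1 − λ)·pC w = c w / Σ_{w*} c w*` for every term `w`. -/
theorem stmt_17 (V : Type*) [Fintype V] [Nonempty V]
    (c : V → ℝ) (hcnn : ∀ w, 0 ≤ c w) (hcpos : 0 < ∑ w, c w)
    (lam : ℝ) (hlam0 : 0 < lam) (hlam1 : lam ≤ 1)
    (theta pC : V → ℝ)
    (hth : ∀ w, 0 < theta w) (hpC : ∀ w, 0 ≤ pC w)
    (hthsum : ∑ w, theta w = 1) (hpCsum : ∑ w, pC w = 1)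
    (hfix : ∀ w, theta w =
      (lam * theta w / (lam * theta w + (1 - lam) * pC w) * c w) /
        ∑ w', lam * theta w' / (lam * theta w' + (1 - lam) * pC w') * c w') :
    ∀ w, lam * theta w + (1 - lam) * pC w = c w / ∑ w', c w' := by
  set m : V → ℝ := fun w => lam * theta w + (1 - lam) * pC w with hm_def
  have hm : ∀ w, 0 < m w := fun w => by
    have h1 : 0 < lam * theta w := mul_pos hlam0 (hth w)
    have h2 : 0 ≤ (1 - lam) * pC w := mul_nonneg (by linarith) (hpC w)
    simp only [hm_def]; linarith
  set S : ℝ := ∑ w', lam * theta w' / (lam * theta w' + (1 - lam) * pC w') * c w' with hS_def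
  obtain ⟨w0, hw0⟩ : ∃ w, 0 < c w := by
    by_contra h
    push_neg at h
    have : ∑ w, c w = 0 := Finset.sum_eq_zero fun w _ => le_antisymm (h w) (hcnn w)
    linarith
  have hS : 0 < S := by
    apply Finset.sum_pos' (fun w _ =>
      mul_nonneg (div_nonneg (mul_nonneg hlam0.le (hth w).le) (hm w).le) (hcnn w))
    exact ⟨w0, Finset.mem_univ w0,
      mul_pos (div_pos (mul_pos hlam0 (hth w0)) (hm w0)) hw0⟩
  have key : ∀ w, m w * S = lam * c w := by
    intro w
    have h1 : theta w * S = lam * theta w / m w * c w := by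
      conv_lhs => rw [hfix w]
      rw [div_mul_cancel₀ _ hS.ne']
    have hmne : m w ≠ 0 := (hm w).ne'
    field_simp [hmne] at h1
    apply mul_left_cancel₀ (hth w).ne'
    linear_combination h1
  have hsum : (∑ w, m w) = 1 := by
    simp only [hm_def, Finset.sum_add_distrib, ← Finset.mul_sum, hthsum, hpCsum]
    ring
  have hSval : S = lam * ∑ w, c w := by
    have h := Finset.sum_congr rfl (fun w (_ : w ∈ Finset.univ) => key w)
    rw [← Finset.sum_mul, ← Finset.mul_sum, hsum, one_mul] at h
    exact h
  intro w
  have h := key w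
  rw [hSval] at h
  have hc : (∑ w', c w') ≠ 0 := hcpos.ne'
  rw [show (lam * theta w + (1 - lam) * pC w) = m w from rfl, eq_div_iff hc]
  have : lam * (m w * ∑ w', c w') = lam * c w := by ring_nf; ring_nf at h; linarith
  exact mul_left_cancel₀ hlam0.ne' this
end

section
/- Let V be a nonempty finite type, c : V → ℝ with c w ≥ 0 for all w and Σ_w c w > 0, 0 < λ ≤ 1, and θ, pC : V → ℝ with θ w > 0 and pC w ≥ 0 for all w, Σ_w θ w = 1 and Σ_w pC w = 1. If θ satisfies the EM fixed-point equation θ w = [ (λ·θ w / (λ·θ w + (1 − λ)·pC w)) · c w ] / [ Σ_{w*} (λ·θ w* / (λ·θ w* + (1 − λ)·pC w*)) · c w* ] for all w, then the EM normalizer satisfies Σ_{w*} (λ·θ w* / (λ·θ w* + (1 − λ)·pC w*)) · c w* = λ · Σ_{w*} c w*. -/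
/-- at an EM fixed point of the Mixture Model Feedback approach, the M-step
normalizer equals `λ · Σ_{w*} c w*`. -/
theorem stmt_18 (V : Type*) [Fintype V] [Nonempty V]
    (c : V → ℝ) (hcnn : ∀ w, 0 ≤ c w) (hcpos : 0 < ∑ w, c w)
    (lam : ℝ) (hlam0 : 0 < lam) (hlam1 : lam ≤ 1)
    (theta pC : V → ℝ)
    (hth : ∀ w, 0 < theta w) (hpC : ∀ w, 0 ≤ pC w)
    (hthsum : ∑ w, theta w = 1) (hpCsum : ∑ w, pC w = 1)
    (hfix : ∀ w, theta w =
      (lam * theta w / (lam * theta w + (1 - lam) * pC w) * c w) /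
        ∑ w', lam * theta w' / (lam * theta w' + (1 - lam) * pC w') * c w') :
    ∑ w', lam * theta w' / (lam * theta w' + (1 - lam) * pC w') * c w' =
      lam * ∑ w', c w' := by
  set S := ∑ w', lam * theta w' / (lam * theta w' + (1 - lam) * pC w') * c w' with hS
  have hden : ∀ w, 0 < lam * theta w + (1 - lam) * pC w := fun w =>
    add_pos_of_pos_of_nonneg (mul_pos hlam0 (hth w))
      (mul_nonneg (by linarith) (hpC w))
  have hSne : S ≠ 0 := by
    intro h0
    have := hfix (Classical.arbitrary V)
    rw [h0, div_zero] at this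
    exact absurd this.symm (ne_of_gt (hth _)).symm
  have key : ∀ w, lam * c w = S * (lam * theta w + (1 - lam) * pC w) := by
    intro w
    have h := hfix w
    have hd := (hden w).ne'
    have ht := (hth w).ne'
    field_simp at h
    -- h : theta w * S * denom = lam * theta w * c w  (or some rearrangement)
    rw [h, div_mul_eq_mul_div, eq_div_iff (ne_of_gt (by linarith [hden w, mul_comm (theta w) lam]))]
    ring
  have hsum : lam * ∑ w', c w' =
      S * (lam * ∑ w, theta w + (1 - lam) * ∑ w, pC w) := by
    rw [Finset.mul_sum]
    rw [show (∑ w', lam * c w') = ∑ w', S * (lam * theta w' + (1 - lam) * pC w')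
      from Finset.sum_congr rfl fun w _ => key w]
    simp only [mul_add, Finset.mul_sum, Finset.sum_add_distrib]
  rw [hthsum, hpCsum] at hsum
  linarith
end

section
/- Let m ≥ 1 and let M, I_S : Fin m → ℝ be probability vectors with I_S i > 0 for all i and M ≠ I_S. Let λ_L = max_i (1 − M i / I_S i) and assume λ_L > 0. For λ̂ ∈ (0, 1] define l̂_{λ̂} i = (1/λ̂)·M i + (1 − 1/λ̂)·I_S i. Then for every λ̂ with λ_L ≤ λ̂ ≤ 1, D(l̂_{λ̂}, I_S) ≤ D(l̂_{λ_L}, I_S); that is, among all admissible coefficients, the lower bound λ_L yields the maximum KL-divergence between DSM's output distribution and the seed irrelevance distribution. -/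
lemma xlog_eq (c : ℝ) (hc : 0 < c) {x : ℝ} (hx : 0 ≤ x) :
    x * Real.log (x / c) = x * Real.log x - x * Real.log c := by
  rcases eq_or_lt_of_le hx with h | h
  · simp [← h]
  · rw [Real.log_div (ne_of_gt h) hc.ne']; ring

lemma conv_term (a b c θ : ℝ) (ha : 0 ≤ a) (hb : 0 ≤ b) (hc : 0 < c)
    (hθ0 : 0 ≤ θ) (hθ1 : θ ≤ 1) :
    ((1 - θ) * a + θ * b) * Real.log (((1 - θ) * a + θ * b) / c) ≤
      (1 - θ) * (a * Real.log (a / c)) + θ * (b * Real.log (b / c)) := by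
  have hcomb : 0 ≤ (1 - θ) * a + θ * b :=
    add_nonneg (mul_nonneg (by linarith) ha) (mul_nonneg hθ0 hb)
  rw [xlog_eq c hc ha, xlog_eq c hc hb, xlog_eq c hc hcomb]
  have hconv := Real.convexOn_mul_log.2 (Set.mem_Ici.mpr ha) (Set.mem_Ici.mpr hb)
    (by linarith : (0:ℝ) ≤ 1 - θ) hθ0 (by ring)
  simp only [smul_eq_mul] at hconv
  nlinarith [hconv]

lemma gibbs_term (p q : ℝ) (hp : 0 ≤ p) (hq : 0 < q) :
    p - q ≤ p * Real.log (p / q) := by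
  rcases eq_or_lt_of_le hp with h | h
  · simp [← h]; linarith
  · have h1 : Real.log (q / p) ≤ q / p - 1 := Real.log_le_sub_one_of_pos (by positivity)
    have h2 : Real.log (q / p) = -Real.log (p / q) := by
      rw [Real.log_div hq.ne' h.ne', Real.log_div h.ne' hq.ne']; ring
    rw [h2] at h1
    have : 1 - q / p ≤ Real.log (p / q) := by linarith
    have := mul_le_mul_of_nonneg_left this (le_of_lt h)
    have hpq : p * (1 - q / p) = p - q := by field_simp
    linarith [hpq ▸ this]

/-- among all admissible coefficients `λ̂ ∈ [λ_L, 1]`, the lower bound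
`λ_L = max_i (1 − M i / I_S i)` yields the maximum KL-divergence between DSM's output
`l̂_λ̂ = (1/λ̂)·M + (1 − 1/λ̂)·I_S` and the seed irrelevance distribution `I_S`. -/
theorem stmt_19 (m : ℕ) (hm : 1 ≤ m) (M IS : Fin m → ℝ)
    (hMnn : ∀ i, 0 ≤ M i) (hMsum : ∑ i, M i = 1)
    (hISpos : ∀ i, 0 < IS i) (hISsum : ∑ i, IS i = 1)
    (hne : M ≠ IS)
    (lamL : ℝ)
    (hlamL : lamL = Finset.univ.sup'
        (Finset.univ_nonempty_iff.mpr (Fin.pos_iff_nonempty.mp hm))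
        (fun i => 1 - M i / IS i))
    (hlamLpos : 0 < lamL) :
    ∀ lam : ℝ, lamL ≤ lam → lam ≤ 1 →
      KL (fun i => (1 / lam) * M i + (1 - 1 / lam) * IS i) IS ≤
        KL (fun i => (1 / lamL) * M i + (1 - 1 / lamL) * IS i) IS := by
  intro lam hlow hup
  have hlampos : 0 < lam := lt_of_lt_of_le hlamLpos hlow
  set pt : Fin m → ℝ := fun i => (1 / lamL) * M i + (1 - 1 / lamL) * IS i with hpt
  set ps : Fin m → ℝ := fun i => (1 / lam) * M i + (1 - 1 / lam) * IS i with hps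
  -- nonnegativity of pt
  have hle : ∀ i, 1 - M i / IS i ≤ lamL := by
    intro i
    rw [hlamL]
    exact Finset.le_sup' (fun i => 1 - M i / IS i) (Finset.mem_univ i)
  have hptnn : ∀ i, 0 ≤ pt i := by
    intro i
    have h1 := hle i
    have h2 := hISpos i
    have h3 : (1 - lamL) * IS i ≤ M i := by
      have := (le_div_iff₀ h2).mp (by linarith : 1 - lamL ≤ M i / IS i)
      linarith [this]
    have : 0 ≤ (1 / lamL) * (M i - (1 - lamL) * IS i) := by
      apply mul_nonneg (by positivity); linarith
    have heq : (1 / lamL) * (M i - (1 - lamL) * IS i) = pt i := by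
      rw [hpt]; field_simp; ring
    linarith [heq ▸ this]
  -- pt sums to 1
  have hptsum : ∑ i, pt i = 1 := by
    simp only [hpt, Finset.sum_add_distrib, ← Finset.mul_sum, hMsum, hISsum]
    ring
  -- KL pt IS ≥ 0
  have hKLt : 0 ≤ KL pt IS := by
    have h := Finset.sum_le_sum (fun i (_ : i ∈ Finset.univ) =>
      gibbs_term (pt i) (IS i) (hptnn i) (hISpos i))
    have : ∑ i, (pt i - IS i) = 0 := by
      rw [Finset.sum_sub_distrib, hptsum, hISsum]; ring
    unfold KL
    linarith [this ▸ h]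
  set θ : ℝ := lamL / lam with hθ
  have hθ0 : 0 ≤ θ := by positivity
  have hθ1 : θ ≤ 1 := (div_le_one hlampos).mpr hlow
  -- ps i = (1-θ) * IS i + θ * pt i
  have hcomb : ∀ i, ps i = (1 - θ) * IS i + θ * pt i := by
    intro i
    simp only [hps, hpt, hθ]
    field_simp
    ring
  have hterm : ∀ i, ps i * Real.log (ps i / IS i) ≤ θ * (pt i * Real.log (pt i / IS i)) := by
    intro i
    have h := conv_term (IS i) (pt i) (IS i) θ (le_of_lt (hISpos i)) (hptnn i)
      (hISpos i) hθ0 hθ1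
    rw [← hcomb i] at h
    have : IS i / IS i = 1 := div_self (hISpos i).ne'
    rw [this, Real.log_one] at h
    linarith [h]
  have hsum : KL ps IS ≤ θ * KL pt IS := by
    unfold KL
    rw [Finset.mul_sum]
    exact Finset.sum_le_sum (fun i _ => hterm i)
  calc KL ps IS ≤ θ * KL pt IS := hsum
    _ ≤ 1 * KL pt IS := mul_le_mul_of_nonneg_right hθ1 hKLt
    _ = KL pt IS := one_mul _
end
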